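/- Let G be a path graph with vertices 1—2—3 (tensor train of order 3) with bond dimensions r₁₂, r₂₃, physical dimensions n₁, n₂, n₃. The bond tuple (r₁₂, r₂₃) is admissible (i.e., some representable tensor requires exactly these bonds) if and only if r₁₂ ≤ n₁, r₂₃ ≤ n₃, r₁₂ ≤ n₂·r₂₃, and r₂₃ ≤ n₂·r₁₂. -/

import Mathlib

/-- `T` is representable by an order-3 tensor train with bond dimensions `(s₁, s₂)`. -/
def TTRepresents {k : Type*} [Field k] {n₁ n₂ n₃ : ℕ} (s₁ s₂ : ℕ)
    (T : Fin n₁ → Fin n₂ → Fin n₃ → k) : Prop :=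
  ∃ (A₁ : Matrix (Fin n₁) (Fin s₁) k) (A₂ : Fin s₁ → Fin n₂ → Fin s₂ → k)
    (A₃ : Matrix (Fin s₂) (Fin n₃) k),
    ∀ i j l, T i j l = ∑ α, ∑ β, A₁ i α * A₂ α j β * A₃ β l

/-- The bond tuple `(r₁₂, r₂₃)` is minimal for `T`: `T` is representable with these bonds
and no componentwise smaller tuple also represents `T`. -/
def TTMinimal {k : Type*} [Field k] {n₁ n₂ n₃ : ℕ} (r₁₂ r₂₃ : ℕ)
    (T : Fin n₁ → Fin n₂ → Fin n₃ → k) : Prop :=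
  TTRepresents r₁₂ r₂₃ T ∧
    ∀ s₁ s₂ : ℕ, s₁ ≤ r₁₂ → s₂ ≤ r₂₃ → TTRepresents s₁ s₂ T → s₁ = r₁₂ ∧ s₂ = r₂₃

section Aux

variable {k : Type*} [Field k]

private lemma sum_fin_ite {m : ℕ} (f : Fin m → k) (t : ℕ) :
    (∑ α : Fin m, if (α : ℕ) = t then f α else 0) =
      if h : t < m then f ⟨t, h⟩ else 0 := by
  split_ifs with h
  · rw [Finset.sum_eq_single (⟨t, h⟩ : Fin m)]
    · simp
    · intro a _ ha
      have : (a : ℕ) ≠ t := fun hc => ha (Fin.ext hc)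
      simp [this]
    · simp
  · apply Finset.sum_eq_zero
    intro a _
    have : (a : ℕ) ≠ t := by omega
    simp [this]

private lemma rep_transpose {n₁ n₂ n₃ s₁ s₂ : ℕ} {T : Fin n₁ → Fin n₂ → Fin n₃ → k}
    (h : TTRepresents s₁ s₂ T) : TTRepresents s₂ s₁ (fun l j i => T i j l) := by
  obtain ⟨A₁, A₂, A₃, h⟩ := h
  refine ⟨fun l β => A₃ β l, fun β j α => A₂ α j β, fun α i => A₁ i α, ?_⟩
  intro l j i
  show T i j l = _
  rw [h i j l, Finset.sum_comm]
  exact Finset.sum_congr rfl fun β _ => Finset.sum_congr rfl fun α _ => by ring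

private lemma min_transpose {n₁ n₂ n₃ r s : ℕ} {T : Fin n₁ → Fin n₂ → Fin n₃ → k}
    (h : TTMinimal r s T) : TTMinimal s r (fun l j i => T i j l) :=
  ⟨rep_transpose h.1, fun s₁ s₂ h1 h2 hr => by
    have := h.2 s₂ s₁ h2 h1 (rep_transpose hr)
    exact ⟨this.2, this.1⟩⟩

/-- The first bond can always be compressed to `n₁`. -/
private lemma rep_bond1_n₁ {n₁ n₂ n₃ s₁ s₂ : ℕ} {T : Fin n₁ → Fin n₂ → Fin n₃ → k}
    (h : TTRepresents s₁ s₂ T) : TTRepresents n₁ s₂ T := by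
  classical
  obtain ⟨A₁, A₂, A₃, h⟩ := h
  refine ⟨fun i γ => if i = γ then 1 else 0,
    fun γ j β => ∑ α, A₁ γ α * A₂ α j β, A₃, ?_⟩
  intro i j l
  rw [h i j l]
  have : ∀ γ : Fin n₁, ∑ β, (if i = γ then (1:k) else 0) * (∑ α, A₁ γ α * A₂ α j β) * A₃ β l
      = if i = γ then ∑ β, (∑ α, A₁ γ α * A₂ α j β) * A₃ β l else 0 := by
    intro γ
    split_ifs with hγ <;> simp
  rw [Finset.sum_congr rfl fun γ _ => this γ, Finset.sum_ite_eq Finset.univ i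
    (fun γ => ∑ β, (∑ α, A₁ γ α * A₂ α j β) * A₃ β l)]
  simp only [Finset.mem_univ, if_true]
  rw [Finset.sum_comm]
  exact Finset.sum_congr rfl fun α _ => (Finset.sum_mul _ _ _).symm

/-- The first bond can always be compressed to `n₂ * s₂`. -/
private lemma rep_bond1_prod {n₁ n₂ n₃ s₁ s₂ : ℕ} {T : Fin n₁ → Fin n₂ → Fin n₃ → k}
    (h : TTRepresents s₁ s₂ T) : TTRepresents (n₂ * s₂) s₂ T := by
  classical
  obtain ⟨A₁, A₂, A₃, h⟩ := h
  refine ⟨fun i γ => ∑ α, A₁ i α * A₂ α (finProdFinEquiv.symm γ).1 (finProdFinEquiv.symm γ).2,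
    fun γ j β => if γ = finProdFinEquiv (j, β) then 1 else 0, A₃, ?_⟩
  intro i j l
  rw [h i j l]
  have key : ∀ β, (∑ γ : Fin (n₂ * s₂),
      (∑ α, A₁ i α * A₂ α (finProdFinEquiv.symm γ).1 (finProdFinEquiv.symm γ).2) *
        (if γ = finProdFinEquiv (j, β) then (1:k) else 0) * A₃ β l)
      = (∑ α, A₁ i α * A₂ α j β) * A₃ β l := by
    intro β
    rw [Finset.sum_eq_single (finProdFinEquiv (j, β))]
    · simp
    · intro γ _ hγ; simp [hγ]
    · simp
  have e2 : (∑ γ : Fin (n₂ * s₂), ∑ β : Fin s₂,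
      (∑ α, A₁ i α * A₂ α (finProdFinEquiv.symm γ).1 (finProdFinEquiv.symm γ).2) *
        (if γ = finProdFinEquiv (j, β) then (1:k) else 0) * A₃ β l)
      = ∑ β : Fin s₂, (∑ α, A₁ i α * A₂ α j β) * A₃ β l := by
    rw [Finset.sum_comm]
    exact Finset.sum_congr rfl fun β _ => key β
  rw [show (∑ α : Fin (n₂ * s₂), ∑ β : Fin s₂,
      (∑ α', A₁ i α' * A₂ α' (finProdFinEquiv.symm α).1 (finProdFinEquiv.symm α).2) *
        (if α = finProdFinEquiv (j, β) then (1:k) else 0) * A₃ β l)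
      = ∑ β : Fin s₂, (∑ α, A₁ i α * A₂ α j β) * A₃ β l from e2]
  rw [Finset.sum_comm]
  exact Finset.sum_congr rfl fun β _ => (Finset.sum_mul _ _ _).symm

/-- The model tensor whose minimal bonds are `(a, b)` (when `a ≤ b`). -/
private def modelT (k : Type*) [Field k] (n₁ n₂ n₃ a b : ℕ) : Fin n₁ → Fin n₂ → Fin n₃ → k :=
  fun i j l => if ((l : ℕ) = (j : ℕ) * a + (i : ℕ) ∧ (i : ℕ) < a ∧ (l : ℕ) < b) then 1 else 0

private lemma modelT_rep {n₁ n₂ n₃ a b : ℕ} :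
    TTRepresents a b (modelT k n₁ n₂ n₃ a b) := by
  classical
  refine ⟨fun i α => if (α : ℕ) = (i : ℕ) then 1 else 0,
    fun α j β => if (β : ℕ) = (j : ℕ) * a + (α : ℕ) then 1 else 0,
    fun β l => if (β : ℕ) = (l : ℕ) then 1 else 0, ?_⟩
  intro i j l
  have inner : ∀ α : Fin a,
      (∑ β : Fin b, (if (α : ℕ) = (i : ℕ) then (1:k) else 0) *
        (if (β : ℕ) = (j : ℕ) * a + (α : ℕ) then (1:k) else 0) *
        (if (β : ℕ) = (l : ℕ) then (1:k) else 0))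
      = if (α : ℕ) = (i : ℕ) then
          (if h : (l : ℕ) < b then (if ((l:ℕ) = (j : ℕ) * a + (α : ℕ)) then (1:k) else 0) else 0)
        else 0 := by
    intro α
    have : ∀ β : Fin b, (if (α : ℕ) = (i : ℕ) then (1:k) else 0) *
        (if (β : ℕ) = (j : ℕ) * a + (α : ℕ) then (1:k) else 0) *
        (if (β : ℕ) = (l : ℕ) then (1:k) else 0)
        = if (β : ℕ) = (l : ℕ) then
            ((if (α : ℕ) = (i : ℕ) then (1:k) else 0) *
             (if (β : ℕ) = (j : ℕ) * a + (α : ℕ) then (1:k) else 0)) else 0 := by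
      intro β; split_ifs <;> ring
    rw [Finset.sum_congr rfl fun β _ => this β,
      sum_fin_ite (fun β : Fin b => (if (α : ℕ) = (i : ℕ) then (1:k) else 0) *
        (if (β : ℕ) = (j : ℕ) * a + (α : ℕ) then (1:k) else 0)) (l : ℕ)]
    split_ifs <;> simp_all
  rw [Finset.sum_congr rfl fun α _ => inner α,
    sum_fin_ite (fun α : Fin a => (if h : (l : ℕ) < b then
      (if ((l:ℕ) = (j : ℕ) * a + (α : ℕ)) then (1:k) else 0) else 0)) (i : ℕ)]
  unfold modelT
  split_ifs <;> simp_all <;> omega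

/-- Generic helper: a linearly independent family of the form `α ↦ ∑ γ, w α γ • G γ`
forces the bound `m ≤ s`. -/
private lemma card_le_of_li {m s : ℕ} {M : Type*} [AddCommGroup M] [Module k M]
    (G : Fin s → M) (w : Fin m → Fin s → k)
    (hli : LinearIndependent k (fun α => ∑ γ, w α γ • G γ)) : m ≤ s := by
  have hcomp : (fun α => ∑ γ, w α γ • G γ) = (Fintype.linearCombination k G) ∘ w := by
    funext α
    simp [Fintype.linearCombination_apply]
  rw [hcomp] at hli
  have hw := hli.of_comp (Fintype.linearCombination k G)
  have := hw.fintype_card_le_finrank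
  simpa [Module.finrank_fin_fun] using this

private lemma modelT_min {n₁ n₂ n₃ a b : ℕ} (ha : 0 < a) (hn₂ : 0 < n₂) (hab : a ≤ b)
    (h1 : a ≤ n₁) (h3 : b ≤ n₃) (hba : b ≤ n₂ * a) {s₁ s₂ : ℕ}
    (hs : TTRepresents s₁ s₂ (modelT k n₁ n₂ n₃ a b)) : a ≤ s₁ ∧ b ≤ s₂ := by
  classical
  obtain ⟨A₁, A₂, A₃, hT⟩ := hs
  constructor
  · -- a ≤ s₁ via linear independence of the mode-1 slices
    set G : Fin s₁ → (Fin n₂ → Fin n₃ → k) := fun γ j l => ∑ β, A₂ γ j β * A₃ β l with hG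
    set w : Fin a → Fin s₁ → k := fun α γ => A₁ (Fin.castLE h1 α) γ with hw
    refine card_le_of_li G w ?_
    have hveq : ∀ (α : Fin a) j l, (∑ γ, w α γ * G γ j l)
        = modelT k n₁ n₂ n₃ a b (Fin.castLE h1 α) j l := by
      intro α j l
      rw [hT]
      simp only [hG, hw]
      exact Finset.sum_congr rfl fun γ _ => by
        rw [Finset.mul_sum]
        exact Finset.sum_congr rfl fun β _ => by ring
    rw [Fintype.linearIndependent_iff]
    intro g hg α'
    have hα'b : (α' : ℕ) < b := lt_of_lt_of_le α'.isLt hab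
    have hl : (α' : ℕ) < n₃ := lt_of_lt_of_le hα'b h3
    have hev := congrFun (congrFun hg (⟨0, hn₂⟩ : Fin n₂)) (⟨(α' : ℕ), hl⟩ : Fin n₃)
    simp only [Finset.sum_apply, Pi.smul_apply, smul_eq_mul, Pi.zero_apply] at hev
    have hterm : ∀ α : Fin a,
        g α * (∑ γ, w α γ * G γ (⟨0, hn₂⟩ : Fin n₂) (⟨(α' : ℕ), hl⟩ : Fin n₃))
        = if (α : ℕ) = (α' : ℕ) then g α else 0 := by
      intro α
      rw [hveq]
      unfold modelT
      simp only [Fin.coe_castLE]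
      have h₃ := α.isLt
      have h₄ := α'.isLt
      split_ifs with h₁ h₂ h₂
      · ring
      · exfalso; omega
      · exfalso; omega
      · ring
    rw [Finset.sum_congr rfl fun α _ => hterm α,
      sum_fin_ite (fun α : Fin a => g α) (α' : ℕ)] at hev
    rw [dif_pos α'.isLt] at hev
    simpa using hev
  · -- b ≤ s₂ via linear independence of the mode-3 slices
    set H : Fin s₂ → (Fin n₁ → Fin n₂ → k) := fun β' i j => ∑ γ, A₁ i γ * A₂ γ j β' with hH
    set w : Fin b → Fin s₂ → k := fun β β' => A₃ β' (Fin.castLE h3 β) with hw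
    refine card_le_of_li H w ?_
    have hveq : ∀ (β : Fin b) i j, (∑ β', w β β' * H β' i j)
        = modelT k n₁ n₂ n₃ a b i j (Fin.castLE h3 β) := by
      intro β i j
      rw [hT, Finset.sum_comm]
      simp only [hH, hw]
      exact Finset.sum_congr rfl fun β' _ => by
        rw [Finset.mul_sum]
        exact Finset.sum_congr rfl fun γ _ => by ring
    rw [Fintype.linearIndependent_iff]
    intro g hg β'
    have hi : (β' : ℕ) % a < n₁ := lt_of_lt_of_le (Nat.mod_lt _ ha) h1
    have hj : (β' : ℕ) / a < n₂ := by
      rw [Nat.div_lt_iff_lt_mul ha]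
      exact lt_of_lt_of_le β'.isLt hba
    have hev := congrFun (congrFun hg (⟨(β' : ℕ) % a, hi⟩ : Fin n₁)) (⟨(β' : ℕ) / a, hj⟩ : Fin n₂)
    simp only [Finset.sum_apply, Pi.smul_apply, smul_eq_mul, Pi.zero_apply] at hev
    have hdm : (β' : ℕ) / a * a + (β' : ℕ) % a = (β' : ℕ) := Nat.div_add_mod' _ _
    have hterm : ∀ β : Fin b,
        g β * (∑ β'', w β β'' * H β'' (⟨(β' : ℕ) % a, hi⟩ : Fin n₁)
          (⟨(β' : ℕ) / a, hj⟩ : Fin n₂))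
        = if (β : ℕ) = (β' : ℕ) then g β else 0 := by
      intro β
      rw [hveq]
      unfold modelT
      simp only [Fin.coe_castLE]
      have hma : (β' : ℕ) % a < a := Nat.mod_lt _ ha
      have h₃ := β.isLt
      have h₄ := β'.isLt
      split_ifs with h₁ h₂ h₂
      · ring
      · exfalso; omega
      · exfalso; omega
      · ring
    rw [Finset.sum_congr rfl fun β _ => hterm β,
      sum_fin_ite (fun β : Fin b => g β) (β' : ℕ)] at hev
    rw [dif_pos β'.isLt] at hev
    simpa using hev

end Aux

/-- For the order-3 tensor train (path graph 1—2—3), the bond tuple `(r₁₂, r₂₃)` is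
admissible, i.e., some tensor has it as its minimal bond tuple, if and only if
`r₁₂ ≤ n₁`, `r₂₃ ≤ n₃`, `r₁₂ ≤ n₂ r₂₃` and `r₂₃ ≤ n₂ r₁₂`. -/
theorem tt_admissible_iff {k : Type*} [Field k] [Infinite k] {n₁ n₂ n₃ r₁₂ r₂₃ : ℕ}
    (hn₁ : 0 < n₁) (hn₂ : 0 < n₂) (hn₃ : 0 < n₃) (hr₁₂ : 0 < r₁₂) (hr₂₃ : 0 < r₂₃) :
    (∃ T : Fin n₁ → Fin n₂ → Fin n₃ → k, TTMinimal r₁₂ r₂₃ T) ↔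
      (r₁₂ ≤ n₁ ∧ r₂₃ ≤ n₃ ∧ r₁₂ ≤ n₂ * r₂₃ ∧ r₂₃ ≤ n₂ * r₁₂) := by
  constructor
  · rintro ⟨T, hmin⟩
    have h1 : r₁₂ ≤ n₁ := by
      by_contra h
      push_neg at h
      have := (hmin.2 n₁ r₂₃ (le_of_lt h) le_rfl (rep_bond1_n₁ hmin.1)).1
      omega
    have h12 : r₁₂ ≤ n₂ * r₂₃ := by
      by_contra h
      push_neg at h
      have := (hmin.2 (n₂ * r₂₃) r₂₃ (le_of_lt h) le_rfl (rep_bond1_prod hmin.1)).1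
      omega
    have hminT := min_transpose hmin
    have h3 : r₂₃ ≤ n₃ := by
      by_contra h
      push_neg at h
      have := (hminT.2 n₃ r₁₂ (le_of_lt h) le_rfl (rep_bond1_n₁ hminT.1)).1
      omega
    have h32 : r₂₃ ≤ n₂ * r₁₂ := by
      by_contra h
      push_neg at h
      have := (hminT.2 (n₂ * r₁₂) r₁₂ (le_of_lt h) le_rfl (rep_bond1_prod hminT.1)).1
      omega
    exact ⟨h1, h3, h12, h32⟩
  · rintro ⟨h1, h3, h12, h32⟩
    rcases le_total r₁₂ r₂₃ with hab | hab
    · exact ⟨modelT k n₁ n₂ n₃ r₁₂ r₂₃, modelT_rep,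
        fun s₁ s₂ hs₁ hs₂ hrep => by
          have := modelT_min hr₁₂ hn₂ hab h1 h3 h32 hrep
          omega⟩
    · have hmin' : TTMinimal r₂₃ r₁₂ (modelT k n₃ n₂ n₁ r₂₃ r₁₂) :=
        ⟨modelT_rep, fun s₁ s₂ hs₁ hs₂ hrep => by
          have := modelT_min hr₂₃ hn₂ hab h3 h1 h12 hrep
          omega⟩
      exact ⟨_, min_transpose hmin'⟩
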